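/- Let d ≥ 0, let n_0 ≥ n_1 ≥ … ≥ n_d ≥ 1 be integers, let N = n_0 + n_1 + … + n_d, and set m_i = n_i + d − i. Then, as rational numbers, C*(N, n_0, …, n_d) = N! · V(m_0, …, m_d)/(m_0! ⋯ m_d!). -/

import Mathlib

/-- The Vandermonde product `∏_{i<j} (x i - x j)`. -/
def vmd {k : ℕ} {R : Type*} [CommRing R] (x : Fin k → R) : R :=
  ∏ i : Fin k, ∏ j ∈ Finset.univ.filter (fun j => i < j), (x i - x j)

section HLFAux

open Finset Matrix Polynomial

noncomputable section

variable {k : ℕ}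

/-- ascending factorial matrix -/
def apA (x : Fin k → ℚ) : Matrix (Fin k) (Fin k) ℚ :=
  Matrix.of fun i j => ∏ q ∈ Finset.range (j : ℕ), (x i + q)

lemma detA (x : Fin k → ℚ) : (apA x).det = (Matrix.vandermonde x).det := by
  have := Matrix.det_eval_matrixOfPolynomials_eq_det_vandermonde x
      (fun j : Fin k => ∏ q ∈ Finset.range (j : ℕ), (X + C (q : ℚ)))
      (fun j => by
        rw [Polynomial.natDegree_prod]
        · rw [Finset.sum_congr rfl fun q _ => Polynomial.natDegree_X_add_C _]
          simp
        · intro q _; exact (Polynomial.monic_X_add_C _).ne_zero)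
      (fun j => Polynomial.monic_prod_of_monic _ _ fun q _ => Polynomial.monic_X_add_C _)
  rw [this]
  congr 1
  ext i j
  simp [apA, Polynomial.eval_prod]

lemma cofactor (A : Matrix (Fin k) (Fin k) ℚ) (i : Fin k) (b : Fin k → ℚ) :
    (A.updateRow i b).det = ∑ j, A.adjugate j i * b j := by
  rw [← Matrix.cramer_transpose_apply, Matrix.cramer_eq_adjugate_mulVec,
    ← Matrix.adjugate_transpose]
  simp [Matrix.mulVec, dotProduct]

lemma key_W (x : Fin k → ℚ) :
    ∑ i, x i * (Matrix.vandermonde (Function.update x i (x i + 1))).det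
      = ((∑ i, x i) + ∑ j : Fin k, (j : ℚ)) * (Matrix.vandermonde x).det := by
  classical
  set A := apA x with hA
  set B : Matrix (Fin k) (Fin k) ℚ := Matrix.of (fun i j => (x i + (j : ℚ)) * A i j) with hB
  have hshift : ∀ i : Fin k, x i * (Matrix.vandermonde (Function.update x i (x i + 1))).det
      = (A.updateRow i (B i)).det := by
    intro i
    rw [← detA]
    have h1 : apA (Function.update x i (x i + 1)) = A.updateRow i
        (fun j => ∏ q ∈ Finset.range (j : ℕ), (x i + 1 + q)) := by
      ext p j
      by_cases hp : p = i
      · subst hp; simp [apA, Matrix.updateRow_self]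
      · simp [hA, apA, Matrix.updateRow_ne hp, Function.update_of_ne hp]
    have hrow : (x i • fun j : Fin k => ∏ q ∈ Finset.range (j : ℕ), (x i + 1 + (q : ℚ))) = B i := by
      funext j
      have h2 : x i * ∏ q ∈ Finset.range (j : ℕ), (x i + 1 + q)
          = ∏ q ∈ Finset.range ((j : ℕ) + 1), (x i + q) := by
        rw [Finset.prod_range_succ', Nat.cast_zero, add_zero, mul_comm]
        congr 1
        apply Finset.prod_congr rfl
        intro q _
        push_cast
        ring
      simp only [Pi.smul_apply, smul_eq_mul, hB, hA, apA, Matrix.of_apply]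
      rw [h2, Finset.prod_range_succ]
      ring
    rw [h1, ← Matrix.det_updateRow_smul, hrow]
  have hBDJ : B = Matrix.diagonal x * A + A * Matrix.diagonal (fun j : Fin k => (j : ℚ)) := by
    ext i j
    simp [hB, Matrix.diagonal_mul, Matrix.mul_diagonal, Matrix.add_apply]
    ring
  calc ∑ i, x i * (Matrix.vandermonde (Function.update x i (x i + 1))).det
      = ∑ i, ∑ j, A.adjugate j i * B i j := by
        exact Finset.sum_congr rfl fun i _ => (hshift i).trans (cofactor A i (B i))
    _ = Matrix.trace (B * A.adjugate) := by
        rw [Matrix.trace]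
        apply Finset.sum_congr rfl
        intro i _
        rw [Matrix.diag_apply, Matrix.mul_apply]
        apply Finset.sum_congr rfl
        intro j _
        ring
    _ = ((∑ i, x i) + ∑ j : Fin k, (j : ℚ)) * (Matrix.vandermonde x).det := by
        rw [hBDJ, Matrix.add_mul, Matrix.trace_add, Matrix.mul_assoc, Matrix.mul_adjugate,
          Matrix.trace_mul_comm (A * Matrix.diagonal _) A.adjugate, ← Matrix.mul_assoc,
          Matrix.adjugate_mul, Matrix.mul_smul, Matrix.mul_one, Matrix.smul_mul,
          Matrix.one_mul, Matrix.trace_smul, Matrix.trace_smul, Matrix.trace_diagonal,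
          Matrix.trace_diagonal, detA]
        simp only [smul_eq_mul]
        ring

end

lemma vmd_eq_W_neg (x : Fin k → ℚ) :
    vmd x = (Matrix.vandermonde (fun i => -x i)).det := by
  rw [Matrix.det_vandermonde, vmd]
  apply Finset.prod_congr rfl
  intro i _
  refine Finset.prod_congr ?_ (fun j _ => by ring)
  ext j
  simp

lemma key_vmd (x : Fin k → ℚ) :
    ∑ i, x i * vmd (Function.update x i (x i - 1))
      = ((∑ i, x i) - ∑ j : Fin k, (j : ℚ)) * vmd x := by
  have h := key_W (fun i => -x i)
  have h2 : ∀ i : Fin k,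
      (Matrix.vandermonde (Function.update (fun i => -x i) i (-x i + 1))).det
        = vmd (Function.update x i (x i - 1)) := by
    intro i
    rw [vmd_eq_W_neg]
    have : (Function.update (fun i => -x i) i (-x i + 1))
        = (fun j => -(Function.update x i (x i - 1) j)) := by
      funext j
      by_cases hj : j = i
      · subst hj; simp; ring
      · simp [Function.update_of_ne hj]
    rw [this]
  simp only [h2] at h
  rw [← vmd_eq_W_neg] at h
  simp only [neg_mul, Finset.sum_neg_distrib] at h
  linear_combination -h

lemma vmd_zero_of_eq {x : Fin k → ℚ} {a b : Fin k} (hab : a < b) (h : x a = x b) :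
    vmd x = 0 := by
  rw [vmd]
  apply Finset.prod_eq_zero (Finset.mem_univ a)
  apply Finset.prod_eq_zero (i := b)
  · simp [hab]
  · rw [h, sub_self]

lemma prod_Ioc_sub (a b : ℕ) : ∏ t ∈ Finset.Ioc a b, (t - a) = (b - a).factorial := by
  induction b with
  | zero =>
      rw [show Finset.Ioc a 0 = ∅ from Finset.Ioc_eq_empty (by omega)]
      simp [Nat.zero_sub]
  | succ b ih =>
      by_cases hab : a ≤ b
      · rw [Finset.prod_Ioc_succ_top hab, ih, show b + 1 - a = (b - a) + 1 from by omega,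
          Nat.factorial_succ, mul_comm]
      · rw [Finset.Ioc_eq_empty (by omega)]
        simp [show b + 1 - a = 0 from by omega]

lemma base_vmd (d : ℕ) :
    vmd (fun i : Fin (d+1) => ((d - (i : ℕ) : ℕ) : ℚ))
      = ∏ i : Fin (d+1), ((d - (i : ℕ)).factorial : ℚ) := by
  rw [vmd]
  apply Finset.prod_congr rfl
  intro i _
  have hstep : ∀ j ∈ Finset.univ.filter (fun j : Fin (d+1) => i < j),
      ((d - (i : ℕ) : ℕ) : ℚ) - ((d - (j : ℕ) : ℕ) : ℚ) = (((j : ℕ) - (i : ℕ) : ℕ) : ℚ) := by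
    intro j hj
    have hij : (i : ℕ) < (j : ℕ) := by
      have := (Finset.mem_filter.mp hj).2
      exact this
    have hjd : (j : ℕ) ≤ d := Fin.is_le j
    rw [Nat.cast_sub (by omega), Nat.cast_sub (by omega), Nat.cast_sub (by omega)]
    ring
  rw [Finset.prod_congr rfl hstep, ← Nat.cast_prod]
  congr 1
  rw [Finset.prod_filter]
  have h2 : ∀ j : Fin (d+1), (if i < j then (j : ℕ) - (i : ℕ) else 1)
      = (fun t => if (i : ℕ) < t then t - (i : ℕ) else 1) (j : ℕ) := by
    intro j
    exact if_congr Fin.lt_iff_val_lt_val rfl rfl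
  rw [Finset.prod_congr rfl (fun j _ => h2 j),
    Fin.prod_univ_eq_prod_range (fun t => if (i : ℕ) < t then t - (i : ℕ) else 1) (d+1),
    ← Finset.prod_filter]
  rw [show (Finset.range (d+1)).filter (fun t => (i : ℕ) < t) = Finset.Ioc (i : ℕ) d from by
    ext t; simp [Finset.mem_Ioc, Finset.mem_range, Finset.mem_filter]; omega]
  exact prod_Ioc_sub _ _

section Comb

variable {d : ℕ}

def cnt {N : ℕ} (w : Fin N → Fin (d+1)) (i : Fin (d+1)) : ℕ :=
  ∑ kk, if w kk = i then 1 else 0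

def pcnt {N : ℕ} (w : Fin N → Fin (d+1)) (L : Fin N) (i : Fin (d+1)) : ℕ :=
  ∑ kk, if kk ≤ L ∧ w kk = i then 1 else 0

def Pw (N : ℕ) (n : Fin (d+1) → ℕ) (w : Fin N → Fin (d+1)) : Prop :=
  (∀ i, cnt w i = n i) ∧
  ∀ L : Fin N, ∀ i j : Fin (d+1), i ≤ j → pcnt w L j ≤ pcnt w L i

lemma sum_cnt {N : ℕ} (w : Fin N → Fin (d+1)) : ∑ i, cnt w i = N := by
  simp only [cnt]
  rw [Finset.sum_comm]
  have : ∀ kk : Fin N, (∑ i, if w kk = i then 1 else 0) = 1 := by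
    intro kk
    rw [Finset.sum_ite_eq (Finset.univ) (w kk) (fun _ => 1)]
    simp
  rw [Finset.sum_congr rfl (fun kk _ => this kk)]
  simp

lemma cnt_snocsplit {M : ℕ} (w : Fin (M+1) → Fin (d+1)) (i : Fin (d+1)) :
    cnt w i = cnt (fun kk => w kk.castSucc) i + (if w (Fin.last M) = i then 1 else 0) :=
  Fin.sum_univ_castSucc (fun kk => if w kk = i then 1 else 0)

lemma pcnt_last {M : ℕ} (w : Fin (M+1) → Fin (d+1)) (i : Fin (d+1)) :
    pcnt w (Fin.last M) i = cnt w i := by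
  unfold pcnt cnt
  apply Finset.sum_congr rfl
  intro kk _
  simp [Fin.le_last]

lemma pcnt_castSucc {M : ℕ} (w : Fin (M+1) → Fin (d+1)) (L : Fin M) (i : Fin (d+1)) :
    pcnt w (Fin.castSucc L) i = pcnt (fun kk => w kk.castSucc) L i := by
  unfold pcnt
  rw [Fin.sum_univ_castSucc (fun kk => if kk ≤ Fin.castSucc L ∧ w kk = i then 1 else 0)]
  have hlast : ¬(Fin.last M ≤ Fin.castSucc L) := not_le.mpr (Fin.castSucc_lt_last L)
  have hterm : ∀ kk : Fin M,
      (if kk.castSucc ≤ Fin.castSucc L ∧ w kk.castSucc = i then 1 else 0)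
        = (if kk ≤ L ∧ w kk.castSucc = i then 1 else 0) :=
    fun kk => if_congr (and_congr_left' Fin.castSucc_le_castSucc_iff) rfl rfl
  rw [Finset.sum_congr rfl (fun kk _ => hterm kk), if_neg, add_zero]
  exact fun hc => hlast hc.1

lemma pw_mono {M : ℕ} {n : Fin (d+1) → ℕ} (w : Fin (M+1) → Fin (d+1))
    (h : Pw (M+1) n w) : ∀ i j, i ≤ j → n j ≤ n i := by
  intro i j hij
  have := h.2 (Fin.last M) i j hij
  rwa [pcnt_last, pcnt_last, h.1 i, h.1 j] at this

lemma pw_sum {N : ℕ} {n : Fin (d+1) → ℕ} (w : Fin N → Fin (d+1)) (h : Pw N n w) :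
    ∑ i, n i = N := by
  rw [← sum_cnt w]
  exact Finset.sum_congr rfl fun i _ => (h.1 i).symm

end Comb

section Comb2

variable {d : ℕ}

lemma pw_snoc {M : ℕ} {n : Fin (d+1) → ℕ} (hmono : ∀ i j, i ≤ j → n j ≤ n i)
    (hsum : ∑ i, n i = M + 1) (i : Fin (d+1)) (w' : Fin M → Fin (d+1))
    (h : Pw M (Function.update n i (n i - 1)) w') : Pw (M+1) n (Fin.snoc w' i) := by
  have hs : ∑ j, Function.update n i (n i - 1) j = M := pw_sum w' h
  rw [Finset.sum_update_of_mem (Finset.mem_univ i), ← Finset.erase_eq] at hs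
  rw [← Finset.add_sum_erase Finset.univ n (Finset.mem_univ i)] at hsum
  have hni : 1 ≤ n i := by omega
  have hrestr : ∀ j,
      cnt (fun kk : Fin M => (Fin.snoc w' i : Fin (M+1) → Fin (d+1)) (Fin.castSucc kk)) j
        = cnt w' j := by
    intro j
    unfold cnt
    apply Finset.sum_congr rfl
    intro kk _
    simp
  have hcnt : ∀ j, cnt (Fin.snoc w' i : Fin (M+1) → Fin (d+1)) j = n j := by
    intro j
    rw [cnt_snocsplit, hrestr, Fin.snoc_last, h.1 j, Function.update_apply]
    by_cases hj : j = i
    · subst hj; rw [if_pos rfl, if_pos rfl]; omega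
    · rw [if_neg hj, if_neg (fun hh => hj hh.symm), add_zero]
  constructor
  · exact hcnt
  · intro L p q hpq
    refine Fin.lastCases ?_ ?_ L
    · rw [pcnt_last, pcnt_last, hcnt p, hcnt q]
      exact hmono p q hpq
    · intro L'
      rw [pcnt_castSucc, pcnt_castSucc]
      have hr : (fun kk : Fin M =>
          (Fin.snoc w' i : Fin (M+1) → Fin (d+1)) (Fin.castSucc kk)) = w' := by
        funext kk; simp
      rw [hr]
      exact h.2 L' p q hpq

lemma pw_restr {M : ℕ} {n : Fin (d+1) → ℕ} (w : Fin (M+1) → Fin (d+1)) (h : Pw (M+1) n w) :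
    Pw M (Function.update n (w (Fin.last M)) (n (w (Fin.last M)) - 1))
      (fun kk => w kk.castSucc) := by
  constructor
  · intro j
    have hc := h.1 j
    rw [cnt_snocsplit w j] at hc
    rw [Function.update_apply]
    by_cases hj : j = w (Fin.last M)
    · subst hj
      rw [if_pos rfl]
      rw [if_pos rfl] at hc
      omega
    · rw [if_neg hj]
      rw [if_neg (fun hh => hj hh.symm), add_zero] at hc
      exact hc
  · intro L p q hpq
    have := h.2 (Fin.castSucc L) p q hpq
    rwa [pcnt_castSucc, pcnt_castSucc] at this

lemma card_zero_of_sum_ne {N : ℕ} {n : Fin (d+1) → ℕ} (h : ∑ i, n i ≠ N) :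
    Nat.card {w : Fin N → Fin (d+1) // Pw N n w} = 0 := by
  have : IsEmpty {w : Fin N → Fin (d+1) // Pw N n w} := ⟨fun ⟨w, hw⟩ => h (pw_sum w hw)⟩
  exact Nat.card_of_isEmpty

lemma card_zero_of_not_mono {M : ℕ} {n : Fin (d+1) → ℕ} {i j : Fin (d+1)} (hij : i ≤ j)
    (hv : n i < n j) :
    Nat.card {w : Fin (M+1) → Fin (d+1) // Pw (M+1) n w} = 0 := by
  have : IsEmpty {w : Fin (M+1) → Fin (d+1) // Pw (M+1) n w} :=
    ⟨fun ⟨w, hw⟩ => absurd (pw_mono w hw i j hij) (by omega)⟩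
  exact Nat.card_of_isEmpty

lemma card_rec {M : ℕ} {n : Fin (d+1) → ℕ}
    (hmono : ∀ i j, i ≤ j → n j ≤ n i) (hsum : ∑ i, n i = M + 1) :
    Nat.card {w : Fin (M+1) → Fin (d+1) // Pw (M+1) n w}
      = ∑ i : Fin (d+1),
          Nat.card {w : Fin M → Fin (d+1) // Pw M (Function.update n i (n i - 1)) w} := by
  classical
  have hG : Function.Bijective
      (fun p : (Σ i : Fin (d+1),
          {w : Fin M → Fin (d+1) // Pw M (Function.update n i (n i - 1)) w}) =>
        (⟨Fin.snoc p.2.1 p.1, pw_snoc hmono hsum p.1 p.2.1 p.2.2⟩ :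
          {w : Fin (M+1) → Fin (d+1) // Pw (M+1) n w})) := by
    constructor
    · rintro ⟨i, w', hw'⟩ ⟨j, u', hu'⟩ hEq
      have hval : (Fin.snoc w' i : Fin (M+1) → Fin (d+1)) = Fin.snoc u' j :=
        congrArg Subtype.val hEq
      have hij : i = j := by
        have := congrFun hval (Fin.last M)
        simpa [Fin.snoc_last] using this
      subst hij
      have huw : w' = u' := funext fun kk => by
        have := congrFun hval (Fin.castSucc kk)
        simpa [Fin.snoc_castSucc] using this
      subst huw
      rfl
    · rintro ⟨w, hw⟩
      refine ⟨⟨w (Fin.last M), ⟨fun kk => w kk.castSucc, pw_restr w hw⟩⟩, ?_⟩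
      apply Subtype.ext
      show Fin.snoc (fun kk => w kk.castSucc) (w (Fin.last M)) = w
      funext kk
      refine Fin.lastCases ?_ ?_ kk
      · rw [Fin.snoc_last]
      · intro kk'
        rw [Fin.snoc_castSucc]
  rw [← Nat.card_eq_of_bijective _ hG]
  letI : ∀ i : Fin (d+1),
      Fintype {w : Fin M → Fin (d+1) // Pw M (Function.update n i (n i - 1)) w} :=
    fun i => Fintype.ofFinite _
  rw [Nat.card_eq_fintype_card, Fintype.card_sigma]
  exact Finset.sum_congr rfl fun i _ => Nat.card_eq_fintype_card.symm

end Comb2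

section Main

variable {d : ℕ}

lemma card_zero_of_not_mono' {N : ℕ} (hN : N ≠ 0) {n : Fin (d+1) → ℕ} {i j : Fin (d+1)}
    (hij : i ≤ j) (hv : n i < n j) :
    Nat.card {w : Fin N → Fin (d+1) // Pw N n w} = 0 := by
  cases N with
  | zero => exact absurd rfl hN
  | succ M => exact card_zero_of_not_mono hij hv

lemma dec_mono' {n : Fin (d+1) → ℕ} (hmono : ∀ i j : Fin (d+1), i ≤ j → n j ≤ n i)
    (i : Fin (d+1)) (h2 : ∀ q, i < q → n q < n i) :
    ∀ p q : Fin (d+1), p ≤ q →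
      Function.update n i (n i - 1) q ≤ Function.update n i (n i - 1) p := by
  intro p q hpq
  rw [Function.update_apply, Function.update_apply]
  by_cases hq : q = i <;> by_cases hp : p = i
  · rw [if_pos hq, if_pos hp]
  · rw [if_pos hq, if_neg hp]
    have : n i ≤ n p := hmono p i (hq ▸ hpq)
    omega
  · rw [if_neg hq, if_pos hp]
    have hlt : i < q := lt_of_le_of_ne (hp ▸ hpq) (fun hh => hq hh.symm)
    have := h2 q hlt
    omega
  · rw [if_neg hq, if_neg hp]
    exact hmono p q hpq

lemma main_hlf : ∀ N : ℕ, ∀ n : Fin (d+1) → ℕ,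
    (∀ i j : Fin (d+1), i ≤ j → n j ≤ n i) → (∑ i, n i = N) →
    (Nat.card {w : Fin N → Fin (d+1) // Pw N n w} : ℚ)
      = (N.factorial : ℚ) * vmd (fun i : Fin (d+1) => ((n i + d - (i:ℕ) : ℕ) : ℚ))
          / ∏ i : Fin (d+1), ((n i + d - (i:ℕ)).factorial : ℚ) := by
  intro N
  induction N with
  | zero =>
      intro n hmono hsum
      have hn0 : ∀ i, n i = 0 := fun i =>
        (Finset.sum_eq_zero_iff).mp hsum i (Finset.mem_univ i)
      haveI : Unique {w : Fin 0 → Fin (d+1) // Pw 0 n w} :=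
        { default := ⟨Fin.elim0, ⟨fun i => by simp [cnt, hn0], fun L => L.elim0⟩⟩
          uniq := fun w => Subtype.ext (funext fun kk => kk.elim0) }
      rw [Nat.card_unique]
      have hx : (fun i : Fin (d+1) => ((n i + d - (i:ℕ) : ℕ) : ℚ))
          = fun i : Fin (d+1) => ((d - (i:ℕ) : ℕ) : ℚ) := by
        funext i; rw [hn0 i, Nat.zero_add]
      have hfac : ∀ i : Fin (d+1), (n i + d - (i:ℕ)) = d - (i:ℕ) := fun i => by
        rw [hn0 i, Nat.zero_add]
      have hPr : (∏ i : Fin (d+1), ((n i + d - (i:ℕ)).factorial : ℚ))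
          = ∏ i : Fin (d+1), ((d - (i:ℕ)).factorial : ℚ) :=
        Finset.prod_congr rfl fun i _ => by rw [hfac i]
      rw [hx, base_vmd, hPr]
      have hP : (∏ i : Fin (d+1), (((d - (i:ℕ)).factorial : ℚ))) ≠ 0 :=
        Finset.prod_ne_zero_iff.mpr fun i _ => Nat.cast_ne_zero.mpr (Nat.factorial_ne_zero _)
      rw [Nat.factorial_zero]
      field_simp
  | succ M ih =>
      intro n hmono hsum
      set m : Fin (d+1) → ℕ := fun i => n i + d - (i:ℕ) with hm
      set x : Fin (d+1) → ℚ := fun i => (m i : ℚ) with hx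
      have hid : ∀ i : Fin (d+1), (i:ℕ) ≤ d := fun i => Fin.is_le i
      have hxg : (fun i : Fin (d+1) => ((n i + d - (i:ℕ) : ℕ) : ℚ)) = x := rfl
      have hfg : (∏ i : Fin (d+1), ((n i + d - (i:ℕ)).factorial : ℚ))
          = ∏ i : Fin (d+1), ((m i).factorial : ℚ) := rfl
      have hprod_ne : (∏ i : Fin (d+1), ((m i).factorial : ℚ)) ≠ 0 :=
        Finset.prod_ne_zero_iff.mpr fun i _ => Nat.cast_ne_zero.mpr (Nat.factorial_ne_zero _)
      have key : ∀ i : Fin (d+1),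
          (Nat.card {w : Fin M → Fin (d+1) // Pw M (Function.update n i (n i - 1)) w} : ℚ)
            = (M.factorial : ℚ) * (x i * vmd (Function.update x i (x i - 1)))
                / ∏ j : Fin (d+1), ((m j).factorial : ℚ) := by
        intro i
        by_cases h0 : n i = 0
        · have hupd : Function.update n i (n i - 1) = n := by
            funext j
            by_cases hj : j = i
            · subst hj; simp [h0]
            · rw [Function.update_of_ne hj]
          have hcard : Nat.card {w : Fin M → Fin (d+1) //
              Pw M (Function.update n i (n i - 1)) w} = 0 := by
            rw [hupd]; exact card_zero_of_sum_ne (by omega)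
          rw [hcard]
          by_cases hd : (i:ℕ) = d
          · have hxi : x i = 0 := by
              simp only [hx, hm]
              rw [h0, hd]
              simp
            rw [hxi]
            simp
          · have hlt : (i:ℕ) < d := lt_of_le_of_ne (hid i) hd
            set i' : Fin (d+1) := ⟨(i:ℕ)+1, by omega⟩ with hi'
            have hii' : i < i' := by rw [Fin.lt_def]; simp [hi']
            have h0' : n i' = 0 := Nat.le_zero.mp (h0 ▸ hmono i i' hii'.le)
            have hveq : Function.update x i (x i - 1) i = Function.update x i (x i - 1) i' := by
              rw [Function.update_self, Function.update_of_ne (ne_of_gt hii')]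
              simp only [hx, hm, h0, h0', show ((i' : Fin (d+1)) : ℕ) = (i:ℕ)+1 from rfl]
              have h1 : 0 + d - (i:ℕ) = (0 + d - ((i:ℕ)+1)) + 1 := by omega
              rw [h1]
              push_cast
              ring
            rw [vmd_zero_of_eq hii' hveq]
            simp
        · have hni : 1 ≤ n i := by omega
          have hmi : 1 ≤ m i := by simp only [hm]; have := hid i; omega
          have hupdm : ∀ j, Function.update n i (n i - 1) j + d - (j:ℕ)
              = Function.update m i (m i - 1) j := by
            intro j
            by_cases hj : j = i
            · rw [hj, Function.update_self, Function.update_self]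
              simp only [hm]
              have := hid i
              omega
            · rw [Function.update_of_ne hj, Function.update_of_ne hj]
          have hfacprodN : (∏ j, (Function.update m i (m i - 1) j).factorial) * m i
              = ∏ j, (m j).factorial := by
            have h1 : (fun j => (Function.update m i (m i - 1) j).factorial)
                = Function.update (fun j => (m j).factorial) i ((m i - 1).factorial) := by
              funext j
              rw [Function.update_apply, Function.update_apply]
              by_cases hj : j = i <;> simp [hj]
            rw [h1, Finset.prod_update_of_mem (Finset.mem_univ i), ← Finset.erase_eq,
              ← Finset.mul_prod_erase Finset.univ (fun j => (m j).factorial) (Finset.mem_univ i),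
              ← Nat.mul_factorial_pred (by omega : m i ≠ 0)]
            ring
          have hvmdarg : (fun j : Fin (d+1) =>
              ((Function.update n i (n i - 1) j + d - (j:ℕ) : ℕ) : ℚ))
                = Function.update x i (x i - 1) := by
            funext j
            rw [hupdm j]
            by_cases hj : j = i
            · rw [hj, Function.update_self, Function.update_self, Nat.cast_sub hmi]
              norm_num [hx]
            · rw [Function.update_of_ne hj, Function.update_of_ne hj]
          by_cases hdec : ∀ p q : Fin (d+1), p ≤ q →
              Function.update n i (n i - 1) q ≤ Function.update n i (n i - 1) p
          · have hsum' : ∑ j, Function.update n i (n i - 1) j = M := by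
              rw [Finset.sum_update_of_mem (Finset.mem_univ i), ← Finset.erase_eq]
              rw [← Finset.add_sum_erase Finset.univ n (Finset.mem_univ i)] at hsum
              omega
            rw [ih (Function.update n i (n i - 1)) hdec hsum']
            rw [show (fun j : Fin (d+1) =>
              ((Function.update n i (n i - 1) j + d - (j:ℕ) : ℕ) : ℚ)) = Function.update x i (x i - 1) from hvmdarg]
            have hupdfac_ne : (∏ j : Fin (d+1),
                ((Function.update n i (n i - 1) j + d - (j:ℕ)).factorial : ℚ)) ≠ 0 :=
              Finset.prod_ne_zero_iff.mpr fun j _ =>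
                Nat.cast_ne_zero.mpr (Nat.factorial_ne_zero _)
            rw [div_eq_div_iff hupdfac_ne hprod_ne]
            have hfacprodQ : (∏ j : Fin (d+1),
                ((Function.update n i (n i - 1) j + d - (j:ℕ)).factorial : ℚ)) * x i
                  = ∏ j : Fin (d+1), ((m j).factorial : ℚ) := by
              have h2 : (∏ j : Fin (d+1),
                  ((Function.update n i (n i - 1) j + d - (j:ℕ)).factorial : ℚ))
                    = ((∏ j, (Function.update m i (m i - 1) j).factorial : ℕ) : ℚ) := by
                rw [Nat.cast_prod]
                exact Finset.prod_congr rfl fun j _ => by rw [hupdm j]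
              rw [h2, hx]
              rw [← Nat.cast_mul, hfacprodN, Nat.cast_prod]
            rw [← hfacprodQ]
            ring
          · have hqex : ∃ q, i < q ∧ n i ≤ n q := by
              by_contra hc
              push_neg at hc
              exact hdec (dec_mono' hmono i hc)
            obtain ⟨q, hiq, hnq⟩ := hqex
            have hltd : (i:ℕ) < d := by
              have h1 := Fin.is_le q
              have h2 := Fin.lt_def.mp hiq
              omega
            set i' : Fin (d+1) := ⟨(i:ℕ)+1, by omega⟩ with hi'
            have hii' : i < i' := by rw [Fin.lt_def]; simp [hi']
            have hi'q : i' ≤ q := by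
              rw [Fin.le_def]
              have := Fin.lt_def.mp hiq
              simp [hi']
              omega
            have hni' : n i' = n i :=
              le_antisymm (hmono i i' hii'.le) (le_trans hnq (hmono i' q hi'q))
            have hM1 : M ≠ 0 := by
              intro h0M
              have h1 : n i + ∑ j ∈ Finset.univ.erase i, n j = M + 1 := by
                rw [Finset.add_sum_erase Finset.univ n (Finset.mem_univ i)]; exact hsum
              have h2 : n i' ≤ ∑ j ∈ Finset.univ.erase i, n j :=
                Finset.single_le_sum (fun j _ => Nat.zero_le _)
                  (Finset.mem_erase.mpr ⟨ne_of_gt hii', Finset.mem_univ i'⟩)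
              omega
            have hviol : Function.update n i (n i - 1) i < Function.update n i (n i - 1) i' := by
              rw [Function.update_self, Function.update_of_ne (ne_of_gt hii')]
              omega
            rw [card_zero_of_not_mono' hM1 hii'.le hviol]
            have hveq : Function.update x i (x i - 1) i = Function.update x i (x i - 1) i' := by
              rw [Function.update_self, Function.update_of_ne (ne_of_gt hii')]
              have h1 : m i' = m i - 1 := by
                simp only [hm]
                rw [hni']
                have := hid i
                have hi'v : ((i' : Fin (d+1)) : ℕ) = (i:ℕ)+1 := rfl
                omega
              rw [hx]
              show (m i : ℚ) - 1 = (m i' : ℚ)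
              rw [h1, Nat.cast_sub hmi]
              norm_num
            rw [vmd_zero_of_eq hii' hveq]
            simp
      rw [hfg, card_rec hmono hsum, Nat.cast_sum,
        Finset.sum_congr rfl (fun i _ => key i), ← Finset.sum_div, ← Finset.mul_sum, key_vmd x]
      have hsum_m : ∑ i, m i = (M + 1) + ∑ i : Fin (d+1), (i:ℕ) := by
        have h1 : ∀ i : Fin (d+1), m i = n i + (d - (i:ℕ)) := fun i => by
          simp only [hm]; have := hid i; omega
        rw [Finset.sum_congr rfl (fun i _ => h1 i), Finset.sum_add_distrib, hsum]
        congr 1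
        rw [Fin.sum_univ_eq_sum_range (fun t => d - t) (d+1),
          Fin.sum_univ_eq_sum_range (fun t => t) (d+1)]
        have := Finset.sum_range_reflect (fun t => t) (d+1)
        rw [← this]
        apply Finset.sum_congr rfl
        intro t ht
        have : t < d + 1 := Finset.mem_range.mp ht
        omega
      have hsx : (∑ i, x i) - (∑ j : Fin (d+1), (j:ℚ)) = ((M:ℚ) + 1) := by
        have h1 : ∑ i, x i = ((∑ i, m i : ℕ) : ℚ) := by rw [Nat.cast_sum]
        have h2 : (∑ j : Fin (d+1), (j:ℚ)) = ((∑ j : Fin (d+1), (j:ℕ) : ℕ) : ℚ) := by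
          rw [Nat.cast_sum]
        rw [h1, h2, hsum_m]
        push_cast
        ring
      rw [hsx]
      rw [Nat.factorial_succ]
      push_cast
      ring

end Main



end HLFAux

/-- `C*(N, n_0, …, n_d)`: the number of lists `(v_1, …, v_N)` of standard basis vectors
of `ℕ^{d+1}` summing to `(n_0, …, n_d)` all of whose partial sums are weakly decreasing
in the coordinates. -/
noncomputable def ballotCountS (d N : ℕ) (n : Fin (d + 1) → ℕ) : ℕ :=
  Nat.card {v : Fin N → Fin (d + 1) → ℕ //
    (∀ k, ∃ i, v k = Pi.single i 1) ∧
    (∀ i, ∑ k, v k i = n i) ∧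
    (∀ L : Fin N, ∀ i j : Fin (d + 1), i ≤ j →
      ∑ k ∈ Finset.univ.filter (fun k => k ≤ L), v k j ≤
        ∑ k ∈ Finset.univ.filter (fun k => k ≤ L), v k i)}

section HLFAux2

open Finset Matrix Polynomial

lemma pw_card_eq (d N : ℕ) (n : Fin (d+1) → ℕ) :
    Nat.card {w : Fin N → Fin (d+1) // Pw N n w} = ballotCountS d N n := by
  classical
  have hsing : ∀ (a i : Fin (d+1)), (Pi.single a 1 : Fin (d+1) → ℕ) i = if a = i then 1 else 0 := by
    intro a i
    rw [Pi.single_apply]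
    exact if_congr eq_comm rfl rfl
  have hsum : ∀ (w : Fin N → Fin (d+1)) (i : Fin (d+1)),
      (∑ kk, (Pi.single (w kk) 1 : Fin (d+1) → ℕ) i) = cnt w i := by
    intro w i
    unfold cnt
    exact Finset.sum_congr rfl fun kk _ => hsing _ _
  have hpsum : ∀ (w : Fin N → Fin (d+1)) (L : Fin N) (i : Fin (d+1)),
      (∑ kk ∈ Finset.univ.filter (fun kk => kk ≤ L), (Pi.single (w kk) 1 : Fin (d+1) → ℕ) i)
        = pcnt w L i := by
    intro w L i
    rw [Finset.sum_filter]
    unfold pcnt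
    apply Finset.sum_congr rfl
    intro kk _
    rw [hsing]
    by_cases h1 : kk ≤ L <;> by_cases h2 : w kk = i <;> simp [h1, h2]
  unfold ballotCountS
  let F : {w : Fin N → Fin (d+1) // Pw N n w} →
      {v : Fin N → Fin (d + 1) → ℕ //
        (∀ k, ∃ i, v k = Pi.single i 1) ∧
        (∀ i, ∑ k, v k i = n i) ∧
        (∀ L : Fin N, ∀ i j : Fin (d + 1), i ≤ j →
          ∑ k ∈ Finset.univ.filter (fun k => k ≤ L), v k j ≤
            ∑ k ∈ Finset.univ.filter (fun k => k ≤ L), v k i)} :=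
    fun w => ⟨fun kk => Pi.single (w.1 kk) 1,
      fun kk => ⟨w.1 kk, rfl⟩,
      fun i => by rw [hsum]; exact w.2.1 i,
      fun L i j hij => by rw [hpsum, hpsum]; exact w.2.2 L i j hij⟩
  apply Nat.card_eq_of_bijective F
  constructor
  · rintro ⟨w, hw⟩ ⟨u, hu⟩ hEq
    have hval : (fun kk => (Pi.single (w kk) 1 : Fin (d+1) → ℕ)) = (fun kk => (Pi.single (u kk) 1 : Fin (d+1) → ℕ)) :=
      congrArg Subtype.val hEq
    apply Subtype.ext
    funext kk
    have h3 := congrFun (congrFun hval kk) (w kk)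
    rw [hsing, hsing, if_pos rfl] at h3
    by_cases h4 : u kk = w kk
    · exact h4.symm
    · rw [if_neg h4] at h3
      exact absurd h3 one_ne_zero
  · rintro ⟨v, hv1, hv2, hv3⟩
    have hv1' := hv1
    choose f hf using hv1'
    have e1 : ∀ (L : Fin N) (p : Fin (d+1)),
        (∑ kk ∈ Finset.univ.filter (fun kk => kk ≤ L), v kk p) = pcnt f L p := by
      intro L p
      rw [← hpsum f L p]
      apply Finset.sum_congr rfl
      intro kk _
      rw [hf kk]
    have hpw : Pw N n f := by
      constructor
      · intro i
        rw [← hsum f i, ← hv2 i]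
        apply Finset.sum_congr rfl
        intro kk _
        rw [hf kk]
      · intro L i j hij
        have := hv3 L i j hij
        rwa [e1 L i, e1 L j] at this
    refine ⟨⟨f, hpw⟩, ?_⟩
    apply Subtype.ext
    funext kk
    exact (hf kk).symm


end HLFAux2

/-- Equation (5) of the paper (the Hook Length Formula in Vandermonde form): for
`n_0 ≥ … ≥ n_d ≥ 1`, `N = n_0 + ⋯ + n_d`, and `m_i = n_i + d - i`,
`C*(N, n_0, …, n_d) = N! · V(m_0, …, m_d)/(m_0! ⋯ m_d!)`. -/
theorem statement15 (d : ℕ) (n : Fin (d + 1) → ℕ)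
    (hmono : ∀ i j : Fin (d + 1), i ≤ j → n j ≤ n i) (hpos : ∀ i, 1 ≤ n i) :
    (ballotCountS d (∑ i, n i) n : ℚ)
      = (Nat.factorial (∑ i, n i) : ℚ) *
          vmd (fun i : Fin (d + 1) => ((n i + d - (i : ℕ) : ℕ) : ℚ)) /
            ∏ i : Fin (d + 1), (Nat.factorial (n i + d - (i : ℕ)) : ℚ) := by
  rw [← pw_card_eq]
  exact main_hlf (∑ i, n i) n hmono rfl
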